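/- Let a, b, c, d, e, f be integers such that the four triples (a,b,c), (c,d,e), (a,e,f), (b,d,f) are admissible, and write x̄ := n−1−x for each integer x. Assume the two inverted binomial factors are nonzero: [2c; c+e−d] ≠ 0 and [2c̄; c̄+ē−d̄] ≠ 0. Then the tetrahedral 6j-symbols satisfy {a,b,c;d,e,f}_tet · {ā,b̄,c̄;d̄,ē,f̄}_tet = {a,b̄,c;d,e,f}_tet · {ā,b,c̄;d̄,ē,f̄}_tet. -/

import Mathlib

/-- The quantum number `{a} = ξ^a - ξ^{-a}` where `ξ = exp(πi/n)`. -/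
noncomputable def qnum (n : ℕ) (a : ℂ) : ℂ :=
  Complex.exp (Real.pi * Complex.I * a / n) - Complex.exp (-(Real.pi * Complex.I * a) / n)

/-- The quantum factorial `{k}! = ∏_{j=1}^k {j}`. -/
noncomputable def qfact (n k : ℕ) : ℂ :=
  ∏ j ∈ Finset.range k, qnum n (j + 1)

/-- The quantum binomial `[a; a-k] = ∏_{j=0}^{k-1} {a-j}/{a-k-j}` (top entry `a`,
difference of the two entries the natural number `k`), an empty product being `1`. -/
noncomputable def qbinom (n : ℕ) (a : ℂ) (k : ℕ) : ℂ :=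
  ∏ j ∈ Finset.range k, qnum n (a - j) / qnum n ((k : ℂ) - j)

/-- The quantum binomial `[a; b]` for integer entries. -/
noncomputable def qbinomZ (n : ℕ) (a b : ℤ) : ℂ :=
  qbinom n (a : ℂ) (a - b).toNat

/-- A triple of integers `(i,j,k)` is admissible. -/
def Admissible (n : ℕ) (i j k : ℤ) : Prop :=
  0 < i ∧ i < (n : ℤ) - 1 ∧ 0 < j ∧ j < (n : ℤ) - 1 ∧ 0 < k ∧ k < (n : ℤ) - 1 ∧
  (n : ℤ) - 1 < i + j + k ∧ i + j + k < 2 * ((n : ℤ) - 1) ∧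
  0 < i + j - k ∧ i + j - k < (n : ℤ) - 1 ∧
  0 < j + k - i ∧ j + k - i < (n : ℤ) - 1 ∧
  0 < k + i - j ∧ k + i - j < (n : ℤ) - 1

/-- The tetrahedral 6j-symbol `{a,b,c;d,e,f}_tet` (the deformed formula for integer
colors, with summation range `s ≤ z ≤ S`). -/
noncomputable def tet6j (n : ℕ) (a b c d e f : ℤ) : ℂ :=
  (-1 : ℂ) ^ (n - 1) *
    (qfact n (c + d - e).toNat * qfact n (a + b - c).toNat) /
    (qfact n (b + d - f).toNat * qfact n (a + f - e).toNat) *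
    qbinomZ n (2 * c) (a + b + c + 1 - n) * (qbinomZ n (2 * c) (c + e - d))⁻¹ *
    ∑ z ∈ Finset.Icc
        (max (max 0 ((n : ℤ) - 1 - 2 * e))
          (max ((d + f - b) - (d + e - c)) ((b + f - d) + (c + d - e) - ((n : ℤ) - 1))))
        (min (min (c + d - e) (a + f - e))
          (min ((n : ℤ) - 1 - (a + e - f)) ((n : ℤ) - 1 - (d + e - c)))),
      qbinomZ n (a + e + f + 1 - n) (2 * e + z + 1 - n) *
      qbinomZ n (a + e - f + z) (a + e - f) *
      qbinomZ n ((b + f - d) + (c + d - e) - z) (b + f - d) *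
      qbinomZ n ((d + e - c) + z) (d + f - b)

section Helpers

set_option maxHeartbeats 2000000

open Complex in
lemma qnum_n_sub (n : ℕ) (hn : 2 ≤ n) (x : ℂ) : qnum n ((n : ℂ) - x) = qnum n x := by
  have hn0 : (n : ℂ) ≠ 0 := Nat.cast_ne_zero.2 (by omega)
  have e1 : (Real.pi : ℂ) * I * ((n : ℂ) - x) / n = (Real.pi : ℂ) * I + -((Real.pi:ℂ)*I*x)/n := by
    field_simp; ring
  have e2 : -((Real.pi : ℂ) * I * ((n : ℂ) - x)) / n = -((Real.pi : ℂ) * I) + (Real.pi:ℂ)*I*x/n := by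
    field_simp; ring
  have e3 : Complex.exp (-((Real.pi:ℂ) * I)) = -1 := by
    rw [Complex.exp_neg, Complex.exp_pi_mul_I]; norm_num
  unfold qnum
  rw [e1, e2, Complex.exp_add, Complex.exp_add, Complex.exp_pi_mul_I, e3]
  ring

open Complex in
lemma qnum_int_ne_zero (n : ℕ) (hn : 2 ≤ n) (m : ℤ) (h1 : 0 < m) (h2 : m < (n:ℤ)) :
    qnum n (m : ℂ) ≠ 0 := by
  have hn0 : (n : ℂ) ≠ 0 := Nat.cast_ne_zero.2 (by omega)
  have hπ : (Real.pi : ℂ) ≠ 0 := Complex.ofReal_ne_zero.2 Real.pi_ne_zero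
  have h2πI : (2 * (Real.pi:ℂ) * I) ≠ 0 :=
    mul_ne_zero (mul_ne_zero two_ne_zero hπ) Complex.I_ne_zero
  intro h
  unfold qnum at h
  rw [sub_eq_zero, Complex.exp_eq_exp_iff_exists_int] at h
  obtain ⟨k, hk⟩ := h
  have hmn : (2 * (Real.pi:ℂ) * I) * (m : ℂ) = (2 * (Real.pi:ℂ) * I) * ((k : ℂ) * n) := by
    field_simp at hk
    linear_combination ((Real.pi:ℂ) * I) * hk
  have := mul_left_cancel₀ h2πI hmn
  have hZ : (m : ℤ) = k * n := by exact_mod_cast this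
  rcases le_or_gt k 0 with hk0 | hk0
  · nlinarith [hZ, h1, h2]
  · have : 1 ≤ k := hk0
    nlinarith [hZ, h1, h2]

lemma qnum_nn (n : ℕ) (hn : 2 ≤ n) : qnum n (n : ℂ) = 0 := by
  have := qnum_n_sub n hn 0
  simp only [sub_zero] at this
  rw [this]
  unfold qnum
  simp

lemma qfact_ne_zero (n : ℕ) (hn : 2 ≤ n) (k : ℕ) (h : k < n) : qfact n k ≠ 0 := by
  unfold qfact
  apply Finset.prod_ne_zero_iff.2
  intro j hj
  rw [Finset.mem_range] at hj
  have : ((j : ℂ) + 1) = ((j + 1 : ℤ) : ℂ) := by push_cast; ring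
  rw [this]
  exact qnum_int_ne_zero n hn (j+1) (by omega) (by omega)

lemma tel_nat (n : ℕ) (hn : 2 ≤ n) : ∀ (k b : ℕ),
    (∏ j ∈ Finset.range k, qnum n ((b : ℂ) + k - j)) * qfact n b = qfact n (b + k) := by
  intro k
  induction k with
  | zero => intro b; simp
  | succ k ih =>
    intro b
    rw [Finset.prod_range_succ]
    have e1 : (b : ℂ) + (k+1 : ℕ) - (k : ℕ) = ((b+1 : ℕ) : ℂ) := by push_cast; ring
    have e2 : ∀ j : ℕ, (b : ℂ) + ((k+1 : ℕ) : ℕ) - j = ((b+1 : ℕ) : ℂ) + (k : ℕ) - j := by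
      intro j; push_cast; ring
    have e3 : qfact n (b + 1) = qfact n b * qnum n ((b:ℂ) + 1) := by
      unfold qfact
      rw [Finset.prod_range_succ]
    calc (∏ j ∈ Finset.range k, qnum n ((b:ℂ) + (k+1:ℕ) - j)) * qnum n ((b:ℂ) + (k+1:ℕ) - (k:ℕ)) * qfact n b
        = (∏ j ∈ Finset.range k, qnum n (((b+1:ℕ):ℂ) + (k:ℕ) - j)) * (qfact n b * qnum n ((b:ℂ)+1)) := by
          rw [e1]
          rw [Finset.prod_congr rfl (fun j _ => by rw [e2 j])]
          push_cast
          ring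
      _ = (∏ j ∈ Finset.range k, qnum n (((b+1:ℕ):ℂ) + (k:ℕ) - j)) * qfact n (b+1) := by rw [e3]
      _ = qfact n (b + 1 + k) := ih (b+1)
      _ = qfact n (b + (k+1)) := by ring_nf

/-- pairing: {k}! {n-1-k}! = {n-1}! -/
lemma pair_nat (n : ℕ) (hn : 2 ≤ n) : ∀ k : ℕ, k ≤ n - 1 →
    qfact n k * qfact n (n - 1 - k) = qfact n (n - 1) := by
  intro k
  induction k with
  | zero => intro _; simp [qfact]
  | succ k ih =>
    intro hk
    have hk' : k ≤ n - 1 := by omega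
    have e1 : qfact n (k+1) = qfact n k * qnum n ((k:ℂ) + 1) := by
      unfold qfact; rw [Finset.prod_range_succ]
    have e2 : qfact n (n - 1 - k) = qfact n (n - 1 - (k+1)) * qnum n (((n - 1 - (k+1) : ℕ) : ℂ) + 1) := by
      have : n - 1 - k = (n - 1 - (k+1)) + 1 := by omega
      rw [this]
      unfold qfact; rw [Finset.prod_range_succ]
    have e3 : qnum n (((n - 1 - (k+1) : ℕ) : ℂ) + 1) = qnum n ((k:ℂ) + 1) := by
      have harg : ((n - 1 - (k+1) : ℕ) : ℂ) + 1 = (n : ℂ) - ((k:ℂ)+1) := by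
        have : (n - 1 - (k+1) : ℕ) = (n - k - 2 : ℕ) := by omega
        rw [this]
        have h2 : ((n - k - 2 : ℕ) : ℂ) = (n : ℂ) - (k : ℂ) - 2 := by
          have : (n - k - 2 : ℕ) = n - (k + 2) := by omega
          rw [this]
          push_cast [Nat.cast_sub (by omega : k + 2 ≤ n)]
          ring
        rw [h2]; ring
      rw [harg, qnum_n_sub n hn]
    calc qfact n (k+1) * qfact n (n - 1 - (k+1))
        = qfact n k * (qfact n (n-1-(k+1)) * qnum n ((k:ℂ)+1)) := by rw [e1]; ring
      _ = qfact n k * (qfact n (n-1-(k+1)) * qnum n (((n - 1 - (k+1) : ℕ) : ℂ) + 1)) := by rw [e3]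
      _ = qfact n k * qfact n (n - 1 - k) := by rw [← e2]
      _ = qfact n (n-1) := ih hk'

/-- pairing, ℤ version with toNat -/
lemma pair2 (n : ℕ) (hn : 2 ≤ n) (A B : ℤ) (hA : 0 ≤ A) (hB : 0 ≤ B)
    (hS : A + B = (n:ℤ) - 1) :
    qfact n A.toNat * qfact n B.toNat = qfact n (n - 1) := by
  have h1 : A.toNat ≤ n - 1 := by omega
  have h2 : B.toNat = n - 1 - A.toNat := by omega
  rw [h2]
  exact pair_nat n hn A.toNat h1

/-- the denominator product of a quantum binomial is a quantum factorial -/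
lemma qbinom_den (n : ℕ) (k : ℕ) :
    (∏ j ∈ Finset.range k, qnum n ((k : ℂ) - j)) = qfact n k := by
  have h := Finset.prod_range_reflect (fun j => qnum n ((j:ℂ) + 1)) k
  calc (∏ j ∈ Finset.range k, qnum n ((k : ℂ) - j))
      = ∏ j ∈ Finset.range k, qnum n (((k - 1 - j : ℕ) : ℂ) + 1) := by
        apply Finset.prod_congr rfl
        intro j hj
        rw [Finset.mem_range] at hj
        congr 1
        have : (k - 1 - j : ℕ) = k - (j+1) := by omega
        rw [this, Nat.cast_sub (by omega : j + 1 ≤ k)]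
        push_cast
        ring
    _ = ∏ j ∈ Finset.range k, qnum n ((j:ℂ) + 1) := h
    _ = qfact n k := rfl

lemma qb_mul (n : ℕ) (hn : 2 ≤ n) (A B : ℤ) (hk : (A - B).toNat < n) :
    qbinomZ n A B * qfact n (A - B).toNat
      = ∏ j ∈ Finset.range (A - B).toNat, qnum n ((A : ℂ) - j) := by
  unfold qbinomZ qbinom
  rw [Finset.prod_div_distrib, qbinom_den]
  exact div_mul_cancel₀ _ (qfact_ne_zero n hn _ hk)

/-- factorial form of the quantum binomial, multiplicative version -/
lemma qbf (n : ℕ) (hn : 2 ≤ n) (A B : ℤ) (k bt at' : ℕ)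
    (hk : (k : ℤ) = A - B) (hbt : (bt : ℤ) = B) (hat : (at' : ℤ) = A)
    (hA : A ≤ (n:ℤ) - 1) :
    qbinomZ n A B * (qfact n k * qfact n bt) = qfact n at' := by
  have hkk : (A - B).toNat = k := by omega
  have h1 : qbinomZ n A B * qfact n k = ∏ j ∈ Finset.range k, qnum n ((A : ℂ) - j) := by
    rw [← hkk] at *
    exact qb_mul n hn A B (by omega)
  rw [← mul_assoc, h1]
  have e : ∀ j : ℕ, ((bt : ℂ) + (k : ℕ) - j) = ((A : ℂ) - j) := by
    intro j
    have h3 : ((bt : ℤ) + (k : ℤ)) = A := by omega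
    have h4 : ((bt : ℂ) + (k : ℂ)) = (A : ℂ) := by exact_mod_cast congrArg (fun t : ℤ => (t : ℂ)) h3
    rw [← h4]
  have h2 : (∏ j ∈ Finset.range k, qnum n ((A:ℂ) - j)) * qfact n bt = qfact n (bt + k) := by
    rw [← tel_nat n hn k bt]
    congr 1
    exact Finset.prod_congr rfl (fun j _ => by rw [e j])
  rw [h2]
  congr 1
  omega

/-- `[n-1; B] = 1` -/
lemma qbinom_top (n : ℕ) (hn : 2 ≤ n) (A B : ℤ) (hA2 : A = (n:ℤ) - 1)
    (h0 : 0 ≤ B) (hB : B ≤ A) :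
    qbinomZ n A B = 1 := by
  have h1 := qbf n hn A B (A-B).toNat B.toNat A.toNat (by omega) (by omega) (by omega) (by omega)
  have h2 : qfact n (A-B).toNat * qfact n B.toNat = qfact n (n-1) := by
    apply pair2 n hn (A-B) B (by omega) h0 (by omega)
  rw [h2] at h1
  have h3 : qfact n A.toNat = qfact n (n-1) := by
    congr 1; omega
  rw [h3] at h1
  exact mul_right_cancel₀ (qfact_ne_zero n hn (n-1) (by omega)) (by rw [one_mul]; exact h1)

/-- vanishing: numerator passes a multiple of n -/
lemma qbinom_zero (n : ℕ) (hn : 2 ≤ n) (A B : ℤ) (hB : B < (n:ℤ)) (hA : (n:ℤ) ≤ A) :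
    qbinomZ n A B = 0 := by
  unfold qbinomZ qbinom
  apply Finset.prod_eq_zero (i := (A - n).toNat)
  · rw [Finset.mem_range]; omega
  · have e : (A : ℂ) - ((A - (n:ℤ)).toNat : ℂ) = (n : ℂ) := by
      have h1 : (((A - (n:ℤ)).toNat : ℤ) : ℂ) = (A : ℂ) - (n : ℂ) := by
        have : ((A - (n:ℤ)).toNat : ℤ) = A - n := by omega
        rw [this]; push_cast; ring
      push_cast at h1 ⊢
      rw [h1]; ring
    rw [e, qnum_nn n hn, zero_div]

lemma sig (n : ℕ) (hn : 2 ≤ n) (a b c d e f : ℤ)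
    (hβ : 0 < b + f - d) (hε : 0 < d + f - b)
    (hq : b + d - f < (n:ℤ) - 1) (hr : (n:ℤ) - 1 < b + d + f) :
    qfact n (b + f - d).toNat * qfact n (d + f - b).toNat *
      ∑ z ∈ Finset.Icc
          (max (max 0 ((n : ℤ) - 1 - 2 * e))
            (max ((d + f - b) - (d + e - c)) ((b + f - d) + (c + d - e) - ((n : ℤ) - 1))))
          (min (min (c + d - e) (a + f - e))
            (min ((n : ℤ) - 1 - (a + e - f)) ((n : ℤ) - 1 - (d + e - c)))),
        (qbinomZ n (a + e + f + 1 - n) (2 * e + z + 1 - n) *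
         qbinomZ n (a + e - f + z) (a + e - f) *
         qbinomZ n ((b + f - d) + (c + d - e) - z) (b + f - d) *
         qbinomZ n ((d + e - c) + z) (d + f - b))
    = qfact n (((n:ℤ) - 1 - b) + f - d).toNat * qfact n (d + f - ((n:ℤ) - 1 - b)).toNat *
      ∑ z ∈ Finset.Icc
          (max (max 0 ((n : ℤ) - 1 - 2 * e))
            (max ((d + f - ((n:ℤ) - 1 - b)) - (d + e - c)) ((((n:ℤ) - 1 - b) + f - d) + (c + d - e) - ((n : ℤ) - 1))))
          (min (min (c + d - e) (a + f - e))
            (min ((n : ℤ) - 1 - (a + e - f)) ((n : ℤ) - 1 - (d + e - c)))),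
        (qbinomZ n (a + e + f + 1 - n) (2 * e + z + 1 - n) *
         qbinomZ n (a + e - f + z) (a + e - f) *
         qbinomZ n ((((n:ℤ) - 1 - b) + f - d) + (c + d - e) - z) (((n:ℤ) - 1 - b) + f - d) *
         qbinomZ n ((d + e - c) + z) (d + f - ((n:ℤ) - 1 - b))) := by
  have hL : (max (max 0 ((n : ℤ) - 1 - 2 * e))
            (max ((d + f - ((n:ℤ) - 1 - b)) - (d + e - c)) ((((n:ℤ) - 1 - b) + f - d) + (c + d - e) - ((n : ℤ) - 1))))
      = (max (max 0 ((n : ℤ) - 1 - 2 * e))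
            (max ((d + f - b) - (d + e - c)) ((b + f - d) + (c + d - e) - ((n : ℤ) - 1)))) := by
    omega
  rw [hL, Finset.mul_sum, Finset.mul_sum]
  apply Finset.sum_congr rfl
  intro z hz
  rw [Finset.mem_Icc] at hz
  obtain ⟨hz1, hz2⟩ := hz
  have key : qfact n (b + f - d).toNat * qfact n (d + f - b).toNat *
      (qbinomZ n ((b + f - d) + (c + d - e) - z) (b + f - d) *
       qbinomZ n ((d + e - c) + z) (d + f - b))
      = qfact n (((n:ℤ) - 1 - b) + f - d).toNat * qfact n (d + f - ((n:ℤ) - 1 - b)).toNat *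
      (qbinomZ n ((((n:ℤ) - 1 - b) + f - d) + (c + d - e) - z) (((n:ℤ) - 1 - b) + f - d) *
       qbinomZ n ((d + e - c) + z) (d + f - ((n:ℤ) - 1 - b))) := by
    apply mul_right_cancel₀ (b := qfact n (c + d - e - z).toNat *
        (qfact n ((d + e - c) + z - (d + f - b)).toNat *
         qfact n ((d + e - c) + z - (d + f - ((n:ℤ) - 1 - b))).toNat))
    · exact mul_ne_zero (qfact_ne_zero n hn _ (by omega))
        (mul_ne_zero (qfact_ne_zero n hn _ (by omega)) (qfact_ne_zero n hn _ (by omega)))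
    have E3 := qbf n hn ((b + f - d) + (c + d - e) - z) (b + f - d)
      (c + d - e - z).toNat (b + f - d).toNat ((b + f - d) + (c + d - e) - z).toNat
      (by omega) (by omega) (by omega) (by omega)
    have E4 := qbf n hn ((d + e - c) + z) (d + f - b)
      ((d + e - c) + z - (d + f - b)).toNat (d + f - b).toNat ((d + e - c) + z).toNat
      (by omega) (by omega) (by omega) (by omega)
    have E3' := qbf n hn ((((n:ℤ) - 1 - b) + f - d) + (c + d - e) - z) (((n:ℤ) - 1 - b) + f - d)
      (c + d - e - z).toNat (((n:ℤ) - 1 - b) + f - d).toNat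
      ((((n:ℤ) - 1 - b) + f - d) + (c + d - e) - z).toNat
      (by omega) (by omega) (by omega) (by omega)
    have E4' := qbf n hn ((d + e - c) + z) (d + f - ((n:ℤ) - 1 - b))
      ((d + e - c) + z - (d + f - ((n:ℤ) - 1 - b))).toNat (d + f - ((n:ℤ) - 1 - b)).toNat
      ((d + e - c) + z).toNat
      (by omega) (by omega) (by omega) (by omega)
    have P1 := pair2 n hn ((b + f - d) + (c + d - e) - z)
      ((d + e - c) + z - (d + f - ((n:ℤ) - 1 - b))) (by omega) (by omega) (by omega)
    have P2 := pair2 n hn ((((n:ℤ) - 1 - b) + f - d) + (c + d - e) - z)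
      ((d + e - c) + z - (d + f - b)) (by omega) (by omega) (by omega)
    calc qfact n (b + f - d).toNat * qfact n (d + f - b).toNat *
        (qbinomZ n ((b + f - d) + (c + d - e) - z) (b + f - d) *
         qbinomZ n ((d + e - c) + z) (d + f - b)) *
        (qfact n (c + d - e - z).toNat *
          (qfact n ((d + e - c) + z - (d + f - b)).toNat *
           qfact n ((d + e - c) + z - (d + f - ((n:ℤ) - 1 - b))).toNat))
        = (qbinomZ n ((b + f - d) + (c + d - e) - z) (b + f - d) *
            (qfact n (c + d - e - z).toNat * qfact n (b + f - d).toNat)) *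
          (qbinomZ n ((d + e - c) + z) (d + f - b) *
            (qfact n ((d + e - c) + z - (d + f - b)).toNat * qfact n (d + f - b).toNat)) *
          qfact n ((d + e - c) + z - (d + f - ((n:ℤ) - 1 - b))).toNat := by ring
      _ = qfact n ((b + f - d) + (c + d - e) - z).toNat * qfact n ((d + e - c) + z).toNat *
          qfact n ((d + e - c) + z - (d + f - ((n:ℤ) - 1 - b))).toNat := by rw [E3, E4]
      _ = (qfact n ((b + f - d) + (c + d - e) - z).toNat *
            qfact n ((d + e - c) + z - (d + f - ((n:ℤ) - 1 - b))).toNat) *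
          qfact n ((d + e - c) + z).toNat := by ring
      _ = qfact n (n - 1) * qfact n ((d + e - c) + z).toNat := by rw [P1]
      _ = (qfact n ((((n:ℤ) - 1 - b) + f - d) + (c + d - e) - z).toNat *
            qfact n ((d + e - c) + z - (d + f - b)).toNat) *
          qfact n ((d + e - c) + z).toNat := by rw [P2]
      _ = (qbinomZ n ((((n:ℤ) - 1 - b) + f - d) + (c + d - e) - z) (((n:ℤ) - 1 - b) + f - d) *
            (qfact n (c + d - e - z).toNat * qfact n (((n:ℤ) - 1 - b) + f - d).toNat)) *
          (qbinomZ n ((d + e - c) + z) (d + f - ((n:ℤ) - 1 - b)) *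
            (qfact n ((d + e - c) + z - (d + f - ((n:ℤ) - 1 - b))).toNat *
             qfact n (d + f - ((n:ℤ) - 1 - b)).toNat)) *
          qfact n ((d + e - c) + z - (d + f - b)).toNat := by rw [E3', E4']; ring
      _ = qfact n (((n:ℤ) - 1 - b) + f - d).toNat * qfact n (d + f - ((n:ℤ) - 1 - b)).toNat *
          (qbinomZ n ((((n:ℤ) - 1 - b) + f - d) + (c + d - e) - z) (((n:ℤ) - 1 - b) + f - d) *
           qbinomZ n ((d + e - c) + z) (d + f - ((n:ℤ) - 1 - b))) *
          (qfact n (c + d - e - z).toNat *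
            (qfact n ((d + e - c) + z - (d + f - b)).toNat *
             qfact n ((d + e - c) + z - (d + f - ((n:ℤ) - 1 - b))).toNat)) := by ring
  linear_combination (qbinomZ n (a + e + f + 1 - n) (2 * e + z + 1 - n) *
    qbinomZ n (a + e - f + z) (a + e - f)) * key

/-- purely algebraic assembly -/
lemma assemble {N1 D1 N2 D2 N3 D3 N4 D4 K1 K2 K3 K4 S1 S2 S3 S4 B1 B2 B3 B4 C1 C2 s : ℂ}
    (hS1 : K1 * S1 = K3 * S3) (hS2 : K4 * S4 = K2 * S2) (hKK : K1 * K2 = K3 * K4)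
    (hN : N1 * N2 = N3 * N4) (hD : D1 * D2 = D3 * D4) (hB : B1 * B2 = B3 * B4)
    (hK : K1 * K2 ≠ 0) :
    s * N1 / D1 * B1 * C1⁻¹ * S1 * (s * N2 / D2 * B2 * C2⁻¹ * S2)
      = s * N3 / D3 * B3 * C1⁻¹ * S3 * (s * N4 / D4 * B4 * C2⁻¹ * S4) := by
  have hD' : D1⁻¹ * D2⁻¹ = D3⁻¹ * D4⁻¹ := by
    rw [← mul_inv, ← mul_inv, hD]
  apply mul_left_cancel₀ hK
  calc K1 * K2 * (s * N1 / D1 * B1 * C1⁻¹ * S1 * (s * N2 / D2 * B2 * C2⁻¹ * S2))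
      = (s * s) * (N1 * N2) * (D1⁻¹ * D2⁻¹) * (B1 * B2) * (C1⁻¹ * C2⁻¹) *
          ((K1 * S1) * (K2 * S2)) := by ring
    _ = (s * s) * (N1 * N2) * (D1⁻¹ * D2⁻¹) * (B1 * B2) * (C1⁻¹ * C2⁻¹) *
          ((K3 * S3) * (K4 * S4)) := by rw [hS1, ← hS2]
    _ = (s * s) * (N1 * N2) * (D1⁻¹ * D2⁻¹) * (B1 * B2) * (C1⁻¹ * C2⁻¹) *
          (S3 * S4) * (K3 * K4) := by ring
    _ = (s * s) * (N3 * N4) * (D3⁻¹ * D4⁻¹) * (B3 * B4) * (C1⁻¹ * C2⁻¹) *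
          (S3 * S4) * (K1 * K2) := by rw [hN, hD', hB, ← hKK]
    _ = K1 * K2 * (s * N3 / D3 * B3 * C1⁻¹ * S3 * (s * N4 / D4 * B4 * C2⁻¹ * S4)) := by ring

end Helpers

/-- Lemma B.1 / Lemma `prop01`: writing `x̄ = n-1-x`, for admissible
integer colors one has
`{a,b,c;d,e,f}_tet ⬝ {ā,b̄,c̄;d̄,ē,f̄}_tet = {a,b̄,c;d,e,f}_tet ⬝ {ā,b,c̄;d̄,ē,f̄}_tet`. -/
theorem tet6j_bar_b (n : ℕ) (hn : 2 ≤ n) (a b c d e f : ℤ)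
    (habc : Admissible n a b c) (hcde : Admissible n c d e)
    (haef : Admissible n a e f) (hbdf : Admissible n b d f)
    (h1 : qbinomZ n (2 * c) (c + e - d) ≠ 0)
    (h2 : qbinomZ n (2 * ((n : ℤ) - 1 - c))
        (((n : ℤ) - 1 - c) + ((n : ℤ) - 1 - e) - ((n : ℤ) - 1 - d)) ≠ 0) :
    tet6j n a b c d e f *
      tet6j n ((n : ℤ) - 1 - a) ((n : ℤ) - 1 - b) ((n : ℤ) - 1 - c)
        ((n : ℤ) - 1 - d) ((n : ℤ) - 1 - e) ((n : ℤ) - 1 - f) =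
    tet6j n a ((n : ℤ) - 1 - b) c d e f *
      tet6j n ((n : ℤ) - 1 - a) b ((n : ℤ) - 1 - c)
        ((n : ℤ) - 1 - d) ((n : ℤ) - 1 - e) ((n : ℤ) - 1 - f) := by
  obtain ⟨p1, p2, p3, p4, p5, p6, p7, p8, p9, p10, p11, p12, p13, p14⟩ := habc
  obtain ⟨q1, q2, q3, q4, q5, q6, q7, q8, q9, q10, q11, q12, q13, q14⟩ := hcde
  obtain ⟨r1, r2, r3, r4, r5, r6, r7, r8, r9, r10, r11, r12, r13, r14⟩ := haef
  obtain ⟨s1, s2, s3, s4, s5, s6, s7, s8, s9, s10, s11, s12, s13, s14⟩ := hbdf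
  have SIG1 := sig n hn a b c d e f (by omega) (by omega) (by omega) (by omega)
  have SIG2 := sig n hn ((n:ℤ) - 1 - a) b ((n:ℤ) - 1 - c) ((n:ℤ) - 1 - d) ((n:ℤ) - 1 - e)
    ((n:ℤ) - 1 - f) (by omega) (by omega) (by omega) (by omega)
  -- K1 * K2 = K3 * K4
  have KKa : qfact n (b + f - d).toNat * qfact n (d + f - b).toNat *
      (qfact n (((n:ℤ) - 1 - b) + ((n:ℤ) - 1 - f) - ((n:ℤ) - 1 - d)).toNat *
       qfact n (((n:ℤ) - 1 - d) + ((n:ℤ) - 1 - f) - ((n:ℤ) - 1 - b)).toNat)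
      = qfact n (n-1) * qfact n (n-1) := by
    calc qfact n (b + f - d).toNat * qfact n (d + f - b).toNat *
        (qfact n (((n:ℤ) - 1 - b) + ((n:ℤ) - 1 - f) - ((n:ℤ) - 1 - d)).toNat *
         qfact n (((n:ℤ) - 1 - d) + ((n:ℤ) - 1 - f) - ((n:ℤ) - 1 - b)).toNat)
        = (qfact n (b + f - d).toNat *
            qfact n (((n:ℤ) - 1 - b) + ((n:ℤ) - 1 - f) - ((n:ℤ) - 1 - d)).toNat) *
          (qfact n (d + f - b).toNat *
            qfact n (((n:ℤ) - 1 - d) + ((n:ℤ) - 1 - f) - ((n:ℤ) - 1 - b)).toNat) := by ring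
      _ = qfact n (n-1) * qfact n (n-1) := by
          rw [pair2 n hn (b + f - d) (((n:ℤ) - 1 - b) + ((n:ℤ) - 1 - f) - ((n:ℤ) - 1 - d))
              (by omega) (by omega) (by omega),
            pair2 n hn (d + f - b) (((n:ℤ) - 1 - d) + ((n:ℤ) - 1 - f) - ((n:ℤ) - 1 - b))
              (by omega) (by omega) (by omega)]
  have KKb : qfact n (((n:ℤ) - 1 - b) + f - d).toNat * qfact n (d + f - ((n:ℤ) - 1 - b)).toNat *
      (qfact n (b + ((n:ℤ) - 1 - f) - ((n:ℤ) - 1 - d)).toNat *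
       qfact n (((n:ℤ) - 1 - d) + ((n:ℤ) - 1 - f) - b).toNat)
      = qfact n (n-1) * qfact n (n-1) := by
    calc qfact n (((n:ℤ) - 1 - b) + f - d).toNat * qfact n (d + f - ((n:ℤ) - 1 - b)).toNat *
        (qfact n (b + ((n:ℤ) - 1 - f) - ((n:ℤ) - 1 - d)).toNat *
         qfact n (((n:ℤ) - 1 - d) + ((n:ℤ) - 1 - f) - b).toNat)
        = (qfact n (((n:ℤ) - 1 - b) + f - d).toNat *
            qfact n (b + ((n:ℤ) - 1 - f) - ((n:ℤ) - 1 - d)).toNat) *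
          (qfact n (d + f - ((n:ℤ) - 1 - b)).toNat *
            qfact n (((n:ℤ) - 1 - d) + ((n:ℤ) - 1 - f) - b).toNat) := by ring
      _ = qfact n (n-1) * qfact n (n-1) := by
          rw [pair2 n hn (((n:ℤ) - 1 - b) + f - d) (b + ((n:ℤ) - 1 - f) - ((n:ℤ) - 1 - d))
              (by omega) (by omega) (by omega),
            pair2 n hn (d + f - ((n:ℤ) - 1 - b)) (((n:ℤ) - 1 - d) + ((n:ℤ) - 1 - f) - b)
              (by omega) (by omega) (by omega)]
  have KK := KKa.trans KKb.symm
  -- numerators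
  have hNa : (qfact n (c + d - e).toNat * qfact n (a + b - c).toNat) *
      (qfact n (((n:ℤ)-1-c) + ((n:ℤ)-1-d) - ((n:ℤ)-1-e)).toNat *
       qfact n (((n:ℤ)-1-a) + ((n:ℤ)-1-b) - ((n:ℤ)-1-c)).toNat)
      = (qfact n (c + d - e).toNat * qfact n (((n:ℤ)-1-c) + ((n:ℤ)-1-d) - ((n:ℤ)-1-e)).toNat) *
        qfact n (n-1) := by
    calc (qfact n (c + d - e).toNat * qfact n (a + b - c).toNat) *
        (qfact n (((n:ℤ)-1-c) + ((n:ℤ)-1-d) - ((n:ℤ)-1-e)).toNat *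
         qfact n (((n:ℤ)-1-a) + ((n:ℤ)-1-b) - ((n:ℤ)-1-c)).toNat)
        = (qfact n (c + d - e).toNat * qfact n (((n:ℤ)-1-c) + ((n:ℤ)-1-d) - ((n:ℤ)-1-e)).toNat) *
          (qfact n (a + b - c).toNat * qfact n (((n:ℤ)-1-a) + ((n:ℤ)-1-b) - ((n:ℤ)-1-c)).toNat) := by
            ring
      _ = (qfact n (c + d - e).toNat * qfact n (((n:ℤ)-1-c) + ((n:ℤ)-1-d) - ((n:ℤ)-1-e)).toNat) *
          qfact n (n-1) := by
            rw [pair2 n hn (a + b - c) (((n:ℤ)-1-a) + ((n:ℤ)-1-b) - ((n:ℤ)-1-c))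
              (by omega) (by omega) (by omega)]
  have hNb : (qfact n (c + d - e).toNat * qfact n (a + ((n:ℤ)-1-b) - c).toNat) *
      (qfact n (((n:ℤ)-1-c) + ((n:ℤ)-1-d) - ((n:ℤ)-1-e)).toNat *
       qfact n (((n:ℤ)-1-a) + b - ((n:ℤ)-1-c)).toNat)
      = (qfact n (c + d - e).toNat * qfact n (((n:ℤ)-1-c) + ((n:ℤ)-1-d) - ((n:ℤ)-1-e)).toNat) *
        qfact n (n-1) := by
    calc (qfact n (c + d - e).toNat * qfact n (a + ((n:ℤ)-1-b) - c).toNat) *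
        (qfact n (((n:ℤ)-1-c) + ((n:ℤ)-1-d) - ((n:ℤ)-1-e)).toNat *
         qfact n (((n:ℤ)-1-a) + b - ((n:ℤ)-1-c)).toNat)
        = (qfact n (c + d - e).toNat * qfact n (((n:ℤ)-1-c) + ((n:ℤ)-1-d) - ((n:ℤ)-1-e)).toNat) *
          (qfact n (a + ((n:ℤ)-1-b) - c).toNat * qfact n (((n:ℤ)-1-a) + b - ((n:ℤ)-1-c)).toNat) := by
            ring
      _ = (qfact n (c + d - e).toNat * qfact n (((n:ℤ)-1-c) + ((n:ℤ)-1-d) - ((n:ℤ)-1-e)).toNat) *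
          qfact n (n-1) := by
            rw [pair2 n hn (a + ((n:ℤ)-1-b) - c) (((n:ℤ)-1-a) + b - ((n:ℤ)-1-c))
              (by omega) (by omega) (by omega)]
  have hN := hNa.trans hNb.symm
  -- denominators
  have hDa : (qfact n (b + d - f).toNat * qfact n (a + f - e).toNat) *
      (qfact n (((n:ℤ)-1-b) + ((n:ℤ)-1-d) - ((n:ℤ)-1-f)).toNat *
       qfact n (((n:ℤ)-1-a) + ((n:ℤ)-1-f) - ((n:ℤ)-1-e)).toNat)
      = (qfact n (a + f - e).toNat * qfact n (((n:ℤ)-1-a) + ((n:ℤ)-1-f) - ((n:ℤ)-1-e)).toNat) *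
        qfact n (n-1) := by
    calc (qfact n (b + d - f).toNat * qfact n (a + f - e).toNat) *
        (qfact n (((n:ℤ)-1-b) + ((n:ℤ)-1-d) - ((n:ℤ)-1-f)).toNat *
         qfact n (((n:ℤ)-1-a) + ((n:ℤ)-1-f) - ((n:ℤ)-1-e)).toNat)
        = (qfact n (a + f - e).toNat * qfact n (((n:ℤ)-1-a) + ((n:ℤ)-1-f) - ((n:ℤ)-1-e)).toNat) *
          (qfact n (b + d - f).toNat * qfact n (((n:ℤ)-1-b) + ((n:ℤ)-1-d) - ((n:ℤ)-1-f)).toNat) := by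
            ring
      _ = (qfact n (a + f - e).toNat * qfact n (((n:ℤ)-1-a) + ((n:ℤ)-1-f) - ((n:ℤ)-1-e)).toNat) *
          qfact n (n-1) := by
            rw [pair2 n hn (b + d - f) (((n:ℤ)-1-b) + ((n:ℤ)-1-d) - ((n:ℤ)-1-f))
              (by omega) (by omega) (by omega)]
  have hDb : (qfact n (((n:ℤ)-1-b) + d - f).toNat * qfact n (a + f - e).toNat) *
      (qfact n (b + ((n:ℤ)-1-d) - ((n:ℤ)-1-f)).toNat *
       qfact n (((n:ℤ)-1-a) + ((n:ℤ)-1-f) - ((n:ℤ)-1-e)).toNat)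
      = (qfact n (a + f - e).toNat * qfact n (((n:ℤ)-1-a) + ((n:ℤ)-1-f) - ((n:ℤ)-1-e)).toNat) *
        qfact n (n-1) := by
    calc (qfact n (((n:ℤ)-1-b) + d - f).toNat * qfact n (a + f - e).toNat) *
        (qfact n (b + ((n:ℤ)-1-d) - ((n:ℤ)-1-f)).toNat *
         qfact n (((n:ℤ)-1-a) + ((n:ℤ)-1-f) - ((n:ℤ)-1-e)).toNat)
        = (qfact n (a + f - e).toNat * qfact n (((n:ℤ)-1-a) + ((n:ℤ)-1-f) - ((n:ℤ)-1-e)).toNat) *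
          (qfact n (((n:ℤ)-1-b) + d - f).toNat * qfact n (b + ((n:ℤ)-1-d) - ((n:ℤ)-1-f)).toNat) := by
            ring
      _ = (qfact n (a + f - e).toNat * qfact n (((n:ℤ)-1-a) + ((n:ℤ)-1-f) - ((n:ℤ)-1-e)).toNat) *
          qfact n (n-1) := by
            rw [pair2 n hn (((n:ℤ)-1-b) + d - f) (b + ((n:ℤ)-1-d) - ((n:ℤ)-1-f))
              (by omega) (by omega) (by omega)]
  have hD := hDa.trans hDb.symm
  -- binomial prefactors
  have BIN : qbinomZ n (2 * c) (a + b + c + 1 - n) *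
      qbinomZ n (2 * ((n:ℤ) - 1 - c)) (((n:ℤ)-1-a) + ((n:ℤ)-1-b) + ((n:ℤ)-1-c) + 1 - n)
      = qbinomZ n (2 * c) (a + ((n:ℤ)-1-b) + c + 1 - n) *
        qbinomZ n (2 * ((n:ℤ) - 1 - c)) (((n:ℤ)-1-a) + b + ((n:ℤ)-1-c) + 1 - n) := by
    rcases lt_trichotomy (2 * c) ((n:ℤ) - 1) with hc | hc | hc
    · rw [qbinom_zero n hn (2 * ((n:ℤ) - 1 - c))
          (((n:ℤ)-1-a) + ((n:ℤ)-1-b) + ((n:ℤ)-1-c) + 1 - n) (by omega) (by omega),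
        qbinom_zero n hn (2 * ((n:ℤ) - 1 - c))
          (((n:ℤ)-1-a) + b + ((n:ℤ)-1-c) + 1 - n) (by omega) (by omega),
        mul_zero, mul_zero]
    · rw [qbinom_top n hn (2 * c) (a + b + c + 1 - n) (by omega) (by omega) (by omega),
        qbinom_top n hn (2 * ((n:ℤ) - 1 - c))
          (((n:ℤ)-1-a) + ((n:ℤ)-1-b) + ((n:ℤ)-1-c) + 1 - n) (by omega) (by omega) (by omega),
        qbinom_top n hn (2 * c) (a + ((n:ℤ)-1-b) + c + 1 - n) (by omega) (by omega) (by omega),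
        qbinom_top n hn (2 * ((n:ℤ) - 1 - c))
          (((n:ℤ)-1-a) + b + ((n:ℤ)-1-c) + 1 - n) (by omega) (by omega) (by omega)]
    · rw [qbinom_zero n hn (2 * c) (a + b + c + 1 - n) (by omega) (by omega),
        qbinom_zero n hn (2 * c) (a + ((n:ℤ)-1-b) + c + 1 - n) (by omega) (by omega),
        zero_mul, zero_mul]
  have hK : qfact n (b + f - d).toNat * qfact n (d + f - b).toNat *
      (qfact n (((n:ℤ) - 1 - b) + ((n:ℤ) - 1 - f) - ((n:ℤ) - 1 - d)).toNat *
       qfact n (((n:ℤ) - 1 - d) + ((n:ℤ) - 1 - f) - ((n:ℤ) - 1 - b)).toNat) ≠ 0 := by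
    exact mul_ne_zero
      (mul_ne_zero (qfact_ne_zero n hn _ (by omega)) (qfact_ne_zero n hn _ (by omega)))
      (mul_ne_zero (qfact_ne_zero n hn _ (by omega)) (qfact_ne_zero n hn _ (by omega)))
  unfold tet6j
  exact assemble SIG1 SIG2 KK hN hD BIN hK
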